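/- Let 0 < H₁ < H₂ < 1/2 and f(R) = K_{H₁}(R)/K_{H₂}(R) for R > 1, where K_H(r) = r^{H-1/2}(r-1)^{H-1/2} + (1/2-H)∫₁^r v^{H-3/2}(v-1)^{H-1/2}dv. Then f(R) → +∞ as R ↓ 1 and f(R) converges to the finite limit f_∞ = ((1/2-H₁)/(1/2-H₂)) · (∫₁^∞ v^{H₁-3/2}(v-1)^{H₁-1/2}dv)/(∫₁^∞ v^{H₂-3/2}(v-1)^{H₂-1/2}dv) as R → +∞. -/

import Mathlib

open MeasureTheory intervalIntegral Real Filter Set Topology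

noncomputable def MGg (H : ℝ) (v : ℝ) : ℝ := v ^ (H - 3/2) * (v - 1) ^ (H - 1/2)

lemma MGg_contOn (H : ℝ) : ContinuousOn (MGg H) (Ioi 1) := by
  apply ContinuousOn.mul
  · exact continuousOn_id.rpow_const fun x hx => Or.inl (ne_of_gt (lt_trans one_pos hx))
  · exact (continuousOn_id.sub continuousOn_const).rpow_const
      fun x hx => Or.inl (sub_ne_zero.2 (ne_of_gt hx))

lemma MGg_nonneg (H : ℝ) {v : ℝ} (hv : 1 ≤ v) : 0 ≤ MGg H v :=
  mul_nonneg (Real.rpow_nonneg (by linarith) _) (Real.rpow_nonneg (by linarith) _)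

lemma MGg_pos (H : ℝ) {v : ℝ} (hv : 1 < v) : 0 < MGg H v :=
  mul_pos (Real.rpow_pos_of_pos (by linarith) _) (Real.rpow_pos_of_pos (by linarith) _)

lemma MGg_integrable (H : ℝ) (h0 : 0 < H) (h1 : H < 1/2) :
    IntegrableOn (MGg H) (Ioi 1) := by
  have h12 : Ioi (1:ℝ) = Ioc 1 2 ∪ Ioi 2 := (Ioc_union_Ioi_eq_Ioi (by norm_num)).symm
  rw [h12]
  refine IntegrableOn.union ?_ ?_
  · have hdom : IntegrableOn (fun v : ℝ => (v - 1) ^ (H - 1/2)) (Ioc 1 2) := by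
      have h := (intervalIntegral.intervalIntegrable_rpow' (a := 0) (b := 1)
        (show (-1:ℝ) < H - 1/2 by linarith)).comp_sub_right 1
      norm_num at h
      exact (intervalIntegrable_iff_integrableOn_Ioc_of_le (by norm_num : (1:ℝ) ≤ 2)).1 h
    refine hdom.mono' (((MGg_contOn H).mono Ioc_subset_Ioi_self).aestronglyMeasurable
      measurableSet_Ioc) ?_
    refine (ae_restrict_iff' measurableSet_Ioc).2 (ae_of_all _ fun v hv => ?_)
    rw [Real.norm_eq_abs, abs_of_nonneg (MGg_nonneg H hv.1.le)]
    exact mul_le_of_le_one_left (Real.rpow_nonneg (by linarith [hv.1]) _)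
      (Real.rpow_le_one_of_one_le_of_nonpos hv.1.le (by linarith))
  · have hdom : IntegrableOn (fun v : ℝ => v ^ (2*H - 2) * 2 ^ ((1:ℝ)/2 - H)) (Ioi 2) :=
      (integrableOn_Ioi_rpow_of_lt (by linarith) (by norm_num)).mul_const _
    refine hdom.mono' (((MGg_contOn H).mono
      (Ioi_subset_Ioi (by norm_num))).aestronglyMeasurable measurableSet_Ioi) ?_
    refine (ae_restrict_iff' measurableSet_Ioi).2 (ae_of_all _ fun v hv => ?_)
    have hv2 : (2:ℝ) < v := hv
    have hv0 : (0:ℝ) < v := by linarith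
    rw [Real.norm_eq_abs, abs_of_nonneg (MGg_nonneg H (by linarith))]
    have h1' : (v - 1) ^ (H - 1/2) ≤ (v/2) ^ (H - 1/2) :=
      Real.rpow_le_rpow_of_nonpos (by linarith) (by linarith) (by linarith)
    have h2' : (v/2 : ℝ) ^ (H - 1/2) = v ^ (H - 1/2) * 2 ^ ((1:ℝ)/2 - H) := by
      rw [Real.div_rpow hv0.le (by norm_num), div_eq_mul_inv, ← Real.rpow_neg (by norm_num),
        neg_sub]
    calc MGg H v ≤ v ^ (H - 3/2) * ((v/2) ^ (H - 1/2)) :=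
          mul_le_mul_of_nonneg_left h1' (Real.rpow_nonneg hv0.le _)
      _ = v ^ (2*H - 2) * 2 ^ ((1:ℝ)/2 - H) := by
          rw [h2', ← mul_assoc, ← Real.rpow_add hv0,
            show H - 3/2 + (H - 1/2) = 2*H - 2 by ring]

lemma MGg_int_pos (H : ℝ) (h0 : 0 < H) (h1 : H < 1/2) :
    0 < ∫ v in Ioi (1:ℝ), MGg H v := by
  rw [setIntegral_pos_iff_support_of_nonneg_ae
    ((ae_restrict_iff' measurableSet_Ioi).2 (ae_of_all _ fun v hv => MGg_nonneg H (le_of_lt hv)))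
    (MGg_integrable H h0 h1)]
  refine lt_of_lt_of_le ?_ (measure_mono (show Ioi (1:ℝ) ⊆ Function.support (MGg H) ∩ Ioi 1
    from fun x hx => ⟨(MGg_pos H hx).ne', hx⟩))
  rw [Real.volume_Ioi]
  exact ENNReal.zero_lt_top

lemma MGg_tendsto_atTop (H : ℝ) (h0 : 0 < H) (h1 : H < 1/2) :
    Tendsto (fun r => ∫ v in (1:ℝ)..r, MGg H v) atTop (𝓝 (∫ v in Ioi (1:ℝ), MGg H v)) :=
  intervalIntegral_tendsto_integral_Ioi 1 (MGg_integrable H h0 h1) tendsto_id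

lemma MGg_tendsto_one (H : ℝ) (h0 : 0 < H) (h1 : H < 1/2) :
    Tendsto (fun r => ∫ v in (1:ℝ)..r, MGg H v) (𝓝[>] 1) (𝓝 0) := by
  have hint : IntegrableOn (MGg H) (uIcc 1 2) := by
    rw [uIcc_of_le (by norm_num), integrableOn_Icc_iff_integrableOn_Ioc]
    exact (MGg_integrable H h0 h1).mono Ioc_subset_Ioi_self le_rfl
  have hc := (intervalIntegral.continuousOn_primitive_interval hint) 1
    (by rw [uIcc_of_le (by norm_num)]; exact ⟨le_rfl, by norm_num⟩)
  have hc' : Tendsto (fun x => ∫ v in (1:ℝ)..x, MGg H v) (𝓝[uIcc (1:ℝ) 2] 1) (𝓝 0) := by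
    simpa using hc.tendsto
  rw [← nhdsWithin_Ioo_eq_nhdsGT (one_lt_two (α := ℝ))]
  exact hc'.mono_left (nhdsWithin_mono _
    (by rw [uIcc_of_le (by norm_num)]; exact Ioo_subset_Icc_self))

lemma A_tendsto_atTop_zero (H : ℝ) (h1 : H < 1/2) :
    Tendsto (fun r : ℝ => r ^ (H - 1/2) * (r - 1) ^ (H - 1/2)) atTop (𝓝 0) := by
  have h : Tendsto (fun x : ℝ => x ^ (H - 1/2)) atTop (𝓝 0) := by
    have := tendsto_rpow_neg_atTop (show (0:ℝ) < 1/2 - H by linarith)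
    simpa [neg_sub] using this
  have h2 : Tendsto (fun r : ℝ => (r - 1) ^ (H - 1/2)) atTop (𝓝 0) := by
    have := h.comp (tendsto_atTop_add_const_right atTop (-1) tendsto_id)
    simpa [Function.comp_def, sub_eq_add_neg] using this
  simpa using h.mul h2

lemma A1_tendsto_atTop (H : ℝ) (h0 : 0 < H) (h1 : H < 1/2) :
    Tendsto (fun r : ℝ => r ^ (H - 1/2) * (r - 1) ^ (H - 1/2)) (𝓝[>] 1) atTop := by
  have hbase : Tendsto (fun r : ℝ => r - 1) (𝓝[>] (1:ℝ)) (𝓝[>] (0:ℝ)) := by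
    apply tendsto_nhdsWithin_of_tendsto_nhds_of_eventually_within
    · have : Tendsto (fun r : ℝ => r - 1) (𝓝 (1:ℝ)) (𝓝 0) := by
        simpa using (continuous_sub_right (1:ℝ)).tendsto 1
      exact this.mono_left nhdsWithin_le_nhds
    · exact eventually_nhdsWithin_of_forall fun r hr => mem_Ioi.2 (sub_pos.2 hr)
  have hpow : Tendsto (fun x : ℝ => x ^ (H - 1/2)) (𝓝[>] (0:ℝ)) atTop := by
    have h1' : Tendsto (fun x : ℝ => (x⁻¹) ^ ((1:ℝ)/2 - H)) (𝓝[>] (0:ℝ)) atTop :=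
      (tendsto_rpow_atTop (by linarith)).comp tendsto_inv_nhdsGT_zero
    refine h1'.congr' ?_
    filter_upwards [self_mem_nhdsWithin] with x hx
    rw [Real.inv_rpow (le_of_lt hx), ← Real.rpow_neg (le_of_lt hx), neg_sub]
  have hfirst : Tendsto (fun r : ℝ => r ^ (H - 1/2)) (𝓝[>] (1:ℝ)) (𝓝 1) := by
    have := (Real.continuousAt_rpow_const 1 (H - 1/2) (Or.inl one_ne_zero)).tendsto
    simpa [Real.one_rpow] using this.mono_left nhdsWithin_le_nhds
  exact hfirst.pos_mul_atTop one_pos (hpow.comp hbase)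

lemma ratio_A_tendsto (H₁ H₂ : ℝ) (h0 : 0 < H₁) (hlt : H₁ < H₂) (h2 : H₂ < 1/2) :
    Tendsto (fun r : ℝ => (r ^ (H₂ - 1/2) * (r - 1) ^ (H₂ - 1/2)) /
        (r ^ (H₁ - 1/2) * (r - 1) ^ (H₁ - 1/2))) (𝓝[>] 1) (𝓝 0) := by
  have hfirst : Tendsto (fun r : ℝ => r ^ (H₂ - H₁)) (𝓝[>] (1:ℝ)) (𝓝 1) := by
    have := (Real.continuousAt_rpow_const 1 (H₂ - H₁) (Or.inl one_ne_zero)).tendsto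
    simpa [Real.one_rpow] using this.mono_left nhdsWithin_le_nhds
  have hsnd : Tendsto (fun r : ℝ => (r - 1) ^ (H₂ - H₁)) (𝓝[>] (1:ℝ)) (𝓝 0) := by
    have hb : Tendsto (fun r : ℝ => r - 1) (𝓝[>] (1:ℝ)) (𝓝 0) := by
      have : Tendsto (fun r : ℝ => r - 1) (𝓝 (1:ℝ)) (𝓝 0) := by
        simpa using (continuous_sub_right (1:ℝ)).tendsto 1
      exact this.mono_left nhdsWithin_le_nhds
    have hc := (Real.continuousAt_rpow_const 0 (H₂ - H₁) (Or.inr (by linarith))).tendsto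
    have := hc.comp hb
    simpa [Real.zero_rpow (show H₂ - H₁ ≠ 0 by linarith), Function.comp_def] using this
  have hprod := hfirst.mul hsnd
  rw [mul_zero] at hprod
  refine hprod.congr' ?_
  filter_upwards [self_mem_nhdsWithin] with r hr
  have hr0 : (0:ℝ) < r := by linarith [mem_Ioi.1 hr]
  have hr1 : (0:ℝ) < r - 1 := by have := mem_Ioi.1 hr; linarith
  rw [mul_div_mul_comm, ← Real.rpow_sub hr0, ← Real.rpow_sub hr1,
    show H₂ - 1/2 - (H₁ - 1/2) = H₂ - H₁ by ring]

theorem MolchanGolosov_ratio_limits (H₁ H₂ : ℝ)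
    (hH₁ : 0 < H₁) (hH : H₁ < H₂) (hH₂ : H₂ < 1/2)
    (K : ℝ → ℝ → ℝ)
    (hK : ∀ H r, K H r = r ^ (H - 1/2) * (r - 1) ^ (H - 1/2)
        + (1/2 - H) * ∫ v in (1:ℝ)..r, v ^ (H - 3/2) * (v - 1) ^ (H - 1/2))
    (f : ℝ → ℝ) (hf : ∀ R, f R = K H₁ R / K H₂ R) :
    Tendsto f (nhdsWithin 1 (Set.Ioi 1)) atTop ∧
    Tendsto f atTop (nhds
      (((1/2 - H₁) / (1/2 - H₂)) *
        ((∫ v in Set.Ioi (1:ℝ), v ^ (H₁ - 3/2) * (v - 1) ^ (H₁ - 1/2)) /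
          ∫ v in Set.Ioi (1:ℝ), v ^ (H₂ - 3/2) * (v - 1) ^ (H₂ - 1/2)))) := by
  have h02 : 0 < H₂ := lt_trans hH₁ hH
  have hH₁2 : H₁ < 1/2 := lt_trans hH hH₂
  have hK' : ∀ H r, K H r = r ^ (H - 1/2) * (r - 1) ^ (H - 1/2)
      + (1/2 - H) * ∫ v in (1:ℝ)..r, MGg H v := hK
  -- positivity / lower bounds for K
  have hKge : ∀ H : ℝ, 0 < H → H < 1/2 → ∀ r : ℝ, 1 < r →
      r ^ (H - 1/2) * (r - 1) ^ (H - 1/2) ≤ K H r := by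
    intro H h0 h1 r hr
    rw [hK' H r]
    have hint : 0 ≤ (1/2 - H) * ∫ v in (1:ℝ)..r, MGg H v := by
      refine mul_nonneg (by linarith) ?_
      exact intervalIntegral.integral_nonneg hr.le fun u hu => MGg_nonneg H hu.1
    linarith
  have hApos : ∀ H : ℝ, ∀ r : ℝ, 1 < r → 0 < r ^ (H - 1/2) * (r - 1) ^ (H - 1/2) := by
    intro H r hr
    exact mul_pos (Real.rpow_pos_of_pos (by linarith) _) (Real.rpow_pos_of_pos (by linarith) _)
  have hK1pos : ∀ r : ℝ, 1 < r → 0 < K H₁ r :=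
    fun r hr => lt_of_lt_of_le (hApos H₁ r hr) (hKge H₁ hH₁ hH₁2 r hr)
  have hK2pos : ∀ r : ℝ, 1 < r → 0 < K H₂ r :=
    fun r hr => lt_of_lt_of_le (hApos H₂ r hr) (hKge H₂ h02 hH₂ r hr)
  constructor
  · -- limit at 1⁺
    have hA1top := A1_tendsto_atTop H₁ hH₁ hH₁2
    have hψ : Tendsto (fun r => K H₂ r / (r ^ (H₁ - 1/2) * (r - 1) ^ (H₁ - 1/2)))
        (𝓝[>] 1) (𝓝 0) := by
      have h₁ := ratio_A_tendsto H₁ H₂ hH₁ hH hH₂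
      have h₂ : Tendsto (fun r => ((1/2 - H₂) * ∫ v in (1:ℝ)..r, MGg H₂ v) *
          (r ^ (H₁ - 1/2) * (r - 1) ^ (H₁ - 1/2))⁻¹) (𝓝[>] 1) (𝓝 0) := by
        have := ((MGg_tendsto_one H₂ h02 hH₂).const_mul (1/2 - H₂)).mul
          hA1top.inv_tendsto_atTop
        simpa using this
      have hsum := h₁.add h₂
      rw [add_zero] at hsum
      refine hsum.congr' ?_
      filter_upwards [self_mem_nhdsWithin] with r hr
      rw [hK' H₂ r]
      ring
    have hφ : Tendsto (fun r => K H₂ r / K H₁ r) (𝓝[>] 1) (𝓝 0) := by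
      refine tendsto_of_tendsto_of_tendsto_of_le_of_le' tendsto_const_nhds hψ ?_ ?_
      · filter_upwards [self_mem_nhdsWithin] with r hr
        exact div_nonneg (hK2pos r hr).le (hK1pos r hr).le
      · filter_upwards [self_mem_nhdsWithin] with r hr
        exact div_le_div_of_nonneg_left (hK2pos r hr).le (hApos H₁ r hr) (hKge H₁ hH₁ hH₁2 r hr)
    have hφ' : Tendsto (fun r => K H₂ r / K H₁ r) (𝓝[>] 1) (𝓝[>] 0) := by
      refine tendsto_nhdsWithin_of_tendsto_nhds_of_eventually_within _ hφ ?_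
      filter_upwards [self_mem_nhdsWithin] with r hr
      exact div_pos (hK2pos r hr) (hK1pos r hr)
    have := hφ'.inv_tendsto_nhdsGT_zero
    refine this.congr fun r => ?_
    rw [Pi.inv_apply, inv_div, ← hf r]
  · -- limit at ∞
    have hKt : ∀ H : ℝ, 0 < H → H < 1/2 →
        Tendsto (K H) atTop (𝓝 ((1/2 - H) * ∫ v in Ioi (1:ℝ), MGg H v)) := by
      intro H h0 h1
      have : Tendsto (fun r => r ^ (H - 1/2) * (r - 1) ^ (H - 1/2)
          + (1/2 - H) * ∫ v in (1:ℝ)..r, MGg H v) atTop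
          (𝓝 (0 + (1/2 - H) * ∫ v in Ioi (1:ℝ), MGg H v)) :=
        (A_tendsto_atTop_zero H h1).add ((MGg_tendsto_atTop H h0 h1).const_mul _)
      rw [zero_add] at this
      exact this.congr fun r => (hK' H r).symm
    have hpos₂ : ((1/2 - H₂) * ∫ v in Ioi (1:ℝ), MGg H₂ v) ≠ 0 :=
      (mul_pos (by linarith) (MGg_int_pos H₂ h02 hH₂)).ne'
    have htop : Tendsto f atTop (𝓝 (((1/2 - H₁) * ∫ v in Ioi (1:ℝ), MGg H₁ v) /
        ((1/2 - H₂) * ∫ v in Ioi (1:ℝ), MGg H₂ v))) :=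
      ((hKt H₁ hH₁ hH₁2).div (hKt H₂ h02 hH₂) hpos₂).congr fun r => (hf r).symm
    have heq : ((1/2 - H₁) / (1/2 - H₂)) *
        ((∫ v in Ioi (1:ℝ), MGg H₁ v) / ∫ v in Ioi (1:ℝ), MGg H₂ v) =
        ((1/2 - H₁) * ∫ v in Ioi (1:ℝ), MGg H₁ v) /
        ((1/2 - H₂) * ∫ v in Ioi (1:ℝ), MGg H₂ v) := div_mul_div_comm _ _ _ _
    show Tendsto f atTop (𝓝 (((1/2 - H₁) / (1/2 - H₂)) *
        ((∫ v in Ioi (1:ℝ), MGg H₁ v) / ∫ v in Ioi (1:ℝ), MGg H₂ v)))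
    rw [heq]
    exact htop
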